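/- arXiv:1502.05993 — 4 statements merged into one kernel-verified Lean document; each statement's English description precedes it below -/
import Mathlib

section
/- Let h, μ, p : ℝ → ℝ with h continuously differentiable and h(x) > 0 for all x, μ(x) > 0 for all x, p differentiable, and let U⁰, Uʰ ∈ ℝ. Suppose u : ℝ × ℝ → ℝ is such that for each x, u(x,y) = U⁰ + (Uʰ − U⁰)·y/h(x) + p′(x)·y(y − h(x))/(2μ(x)), and suppose the flux x ↦ ∫₀^{h(x)} u(x,y) dy is constant in x. Then the function x ↦ h(x)³ p′(x)/(12 μ(x)) is differentiable and satisfies d/dx [ h³ p′ / (12μ) ] = (h′/2)(U⁰ + Uʰ). -/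
/-- Integral of a quadratic polynomial. -/
lemma poly_int (b c d a : ℝ) :
    (∫ y in (0:ℝ)..a, (b + c * y + d * y ^ 2)) = b * a + c * a ^ 2 / 2 + d * a ^ 3 / 3 := by
  have hderiv : ∀ y ∈ Set.uIcc (0:ℝ) a,
      HasDerivAt (fun y => b * y + c * y ^ 2 / 2 + d * y ^ 3 / 3) (b + c * y + d * y ^ 2) y := by
    intro y _
    have h1 : HasDerivAt (fun y : ℝ => b * y) b y := by
      simpa using (hasDerivAt_id y).const_mul b
    have h2 : HasDerivAt (fun y : ℝ => c * y ^ 2 / 2) (c * y) y := by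
      have := ((hasDerivAt_pow 2 y).const_mul c).div_const 2
      simpa using this.congr_deriv (by ring)
    have h3 : HasDerivAt (fun y : ℝ => d * y ^ 3 / 3) (d * y ^ 2) y := by
      have := ((hasDerivAt_pow 3 y).const_mul d).div_const 3
      simpa using this.congr_deriv (by ring)
    exact (h1.add h2).add h3
  have hint : IntervalIntegrable (fun y => b + c * y + d * y ^ 2) MeasureTheory.volume 0 a :=
    (Continuous.intervalIntegrable (by continuity)) _ _
  rw [intervalIntegral.integral_eq_sub_of_hasDerivAt hderiv hint]
  ring

/-- The classical Reynolds equation: if `u` is the Couette–Poiseuille profile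
`u x y = U⁰ + (Uʰ − U⁰) y / h x + p' x · y (y − h x) / (2 μ x)` and the flux
`x ↦ ∫₀^{h x} u x y dy` is constant, then
`d/dx [ h³ p' / (12 μ) ] = (h'/2)(U⁰ + Uʰ)`. -/
theorem classical_reynolds_equation
    (h μ p : ℝ → ℝ) (hh : ContDiff ℝ 1 h) (hpos : ∀ x, 0 < h x)
    (hμpos : ∀ x, 0 < μ x) (hp : Differentiable ℝ p) (U0 Uh : ℝ)
    (u : ℝ → ℝ → ℝ)
    (hu : ∀ x y, u x y = U0 + (Uh - U0) * y / h x + deriv p x * (y * (y - h x)) / (2 * μ x))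
    (hflux : ∀ x₁ x₂, (∫ y in (0:ℝ)..h x₁, u x₁ y) = ∫ y in (0:ℝ)..h x₂, u x₂ y) :
    ∀ x, HasDerivAt (fun x => h x ^ 3 * deriv p x / (12 * μ x))
      (deriv h x / 2 * (U0 + Uh)) x := by
  have hflux_eval : ∀ x, (∫ y in (0:ℝ)..h x, u x y)
      = (U0 + Uh) / 2 * h x - h x ^ 3 * deriv p x / (12 * μ x) := by
    intro x
    have hne : h x ≠ 0 := (hpos x).ne'
    have hμne : μ x ≠ 0 := (hμpos x).ne'
    have hcong : (∫ y in (0:ℝ)..h x, u x y)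
        = ∫ y in (0:ℝ)..h x,
            (U0 + ((Uh - U0) / h x - deriv p x * h x / (2 * μ x)) * y
              + (deriv p x / (2 * μ x)) * y ^ 2) := by
      apply intervalIntegral.integral_congr
      intro y _
      rw [hu]
      field_simp
      ring
    rw [hcong, poly_int]
    field_simp
    ring
  set C := (∫ y in (0:ℝ)..h 0, u 0 y) with hC
  have key : ∀ x, h x ^ 3 * deriv p x / (12 * μ x) = (U0 + Uh) / 2 * h x - C := by
    intro x
    have := hflux_eval x
    rw [hflux x 0] at this
    linarith [this]
  intro x
  have hfun : (fun x => h x ^ 3 * deriv p x / (12 * μ x))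
      = fun x => (U0 + Uh) / 2 * h x - C := funext key
  rw [hfun]
  have hd : HasDerivAt h (deriv h x) x :=
    ((hh.differentiable one_ne_zero) x).hasDerivAt
  have := (hd.const_mul ((U0 + Uh) / 2)).sub_const C
  exact this.congr_deriv (by ring)
end

section
/- Let h > 0, μ > 0, and 𝒜, G, U⁰, Uʰ ∈ ℝ. Suppose u : [0,h] → ℝ is twice continuously differentiable and satisfies μ u″(y) + 𝒜²μ²G·(u′(y))² = G for all y ∈ [0,h], with u(0) = U⁰ and u(h) = Uʰ. Then 2μ ∫₀ʰ u(y) dy − μ h (U⁰ + Uʰ) + 𝒜²μ² G ∫₀ʰ y(y − h)(u′(y))² dy = −G h³ / 6. -/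
/-- Multiplying the nonlinear ODE `μ u'' + 𝒜² μ² G (u')² = G` (equation (reyn1))
by `y (y − h)` and integrating over `[0, h]` gives
`2μ ∫₀ʰ u dy − μ h (U⁰ + Uʰ) + 𝒜² μ² G ∫₀ʰ y (y − h) (u')² dy = −G h³ / 6`. -/
theorem modified_reynolds_integral_identity
    (h μ 𝒜 G U0 Uh : ℝ) (hh : 0 < h) (hμ : 0 < μ)
    (u u' u'' : ℝ → ℝ)
    (hu : ∀ y ∈ Set.Icc 0 h, HasDerivWithinAt u (u' y) (Set.Icc 0 h) y)
    (hu' : ∀ y ∈ Set.Icc 0 h, HasDerivWithinAt u' (u'' y) (Set.Icc 0 h) y)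
    (hu'' : ContinuousOn u'' (Set.Icc 0 h))
    (hode : ∀ y ∈ Set.Icc 0 h, μ * u'' y + 𝒜 ^ 2 * μ ^ 2 * G * (u' y) ^ 2 = G)
    (hbc0 : u 0 = U0) (hbch : u h = Uh) :
    2 * μ * (∫ y in (0:ℝ)..h, u y) - μ * h * (U0 + Uh)
        + 𝒜 ^ 2 * μ ^ 2 * G * (∫ y in (0:ℝ)..h, y * (y - h) * (u' y) ^ 2)
      = -(G * h ^ 3) / 6 := by
  have hle : (0:ℝ) ≤ h := hh.le
  have hcu : ContinuousOn u (Set.Icc 0 h) := fun y hy =>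
    (hu y hy).continuousWithinAt
  have hcu' : ContinuousOn u' (Set.Icc 0 h) := fun y hy =>
    (hu' y hy).continuousWithinAt
  have hcpoly : Continuous fun y : ℝ => y * (y - h) := by continuity
  -- integrability facts
  have hiu : IntervalIntegrable u MeasureTheory.volume 0 h :=
    hcu.intervalIntegrable_of_Icc hle
  have hiq : IntervalIntegrable (fun y => y * (y - h) * (u' y) ^ 2)
      MeasureTheory.volume 0 h :=
    ((hcpoly.continuousOn.mul (hcu'.pow 2))).intervalIntegrable_of_Icc hle
  have hiu'' : IntervalIntegrable (fun y => y * (y - h) * u'' y)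
      MeasureTheory.volume 0 h :=
    ((hcpoly.continuousOn.mul hu'')).intervalIntegrable_of_Icc hle
  -- Step 1: FTC for F y = y(y-h) u' y - (2y-h) u y
  have key1 : (∫ y in (0:ℝ)..h, (y * (y - h) * u'' y - 2 * u y))
      = (-(h * Uh)) - (h * U0) := by
    have := intervalIntegral.integral_eq_sub_of_hasDeriv_right_of_le hle
      (f := fun y => y * (y - h) * u' y - (2 * y - h) * u y)
      (f' := fun y => y * (y - h) * u'' y - 2 * u y)
      (by
        apply ContinuousOn.sub
        · exact hcpoly.continuousOn.mul hcu'
        · exact (Continuous.continuousOn (by continuity)).mul hcu)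
      (by
        intro x hx
        have hx' : x ∈ Set.Icc (0:ℝ) h := Set.mem_Icc.2 ⟨hx.1.le, hx.2.le⟩
        have hmem : Set.Icc (0:ℝ) h ∈ nhds x := Icc_mem_nhds hx.1 hx.2
        have h1 : HasDerivAt u (u' x) x := (hu x hx').hasDerivAt hmem
        have h2 : HasDerivAt u' (u'' x) x := (hu' x hx').hasDerivAt hmem
        have hp : HasDerivAt (fun y : ℝ => y * (y - h)) (2 * x - h) x := by
          have : HasDerivAt (fun y : ℝ => y * (y - h)) (1 * (x - h) + x * 1) x :=
            (hasDerivAt_id x).mul ((hasDerivAt_id x).sub_const h)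
          simpa using this.congr_deriv (by ring)
        have hq : HasDerivAt (fun y : ℝ => 2 * y - h) 2 x := by
          simpa using ((hasDerivAt_id x).const_mul 2).sub_const h
        have hF : HasDerivAt
            (fun y => y * (y - h) * u' y - (2 * y - h) * u y)
            ((2 * x - h) * u' x + x * (x - h) * u'' x
              - (2 * u x + (2 * x - h) * u' x)) x :=
          (hp.mul h2).sub (hq.mul h1)
        have := hF.congr_deriv (by ring :
          (2 * x - h) * u' x + x * (x - h) * u'' x
              - (2 * u x + (2 * x - h) * u' x)
            = x * (x - h) * u'' x - 2 * u x)
        exact this.hasDerivWithinAt)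
      (hiu''.sub ((hiu.const_mul 2)))
    rw [this]
    simp only [hbc0, hbch]
    ring
  have key1' : (∫ y in (0:ℝ)..h, y * (y - h) * u'' y)
      = 2 * (∫ y in (0:ℝ)..h, u y) - h * (U0 + Uh) := by
    have hsplit : (∫ y in (0:ℝ)..h, (y * (y - h) * u'' y - 2 * u y))
        = (∫ y in (0:ℝ)..h, y * (y - h) * u'' y)
          - 2 * (∫ y in (0:ℝ)..h, u y) := by
      rw [intervalIntegral.integral_sub hiu'' (hiu.const_mul 2),
        intervalIntegral.integral_const_mul]
    rw [hsplit] at key1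
    linarith
  -- Step 2: polynomial integral
  have key2 : (∫ y in (0:ℝ)..h, y * (y - h)) = -(h ^ 3) / 6 := by
    have hd : ∀ x ∈ Set.uIcc (0:ℝ) h,
        HasDerivAt (fun y : ℝ => y ^ 3 / 3 - h * y ^ 2 / 2) (x * (x - h)) x := by
      intro x _
      have h3 : HasDerivAt (fun y : ℝ => y ^ 3 / 3) ((3 : ℕ) * x ^ 2 / 3) x :=
        (hasDerivAt_pow 3 x).div_const 3
      have h2 : HasDerivAt (fun y : ℝ => h * y ^ 2 / 2) (h * ((2 : ℕ) * x ^ 1) / 2) x :=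
        ((hasDerivAt_pow 2 x).const_mul h).div_const 2
      have : HasDerivAt (fun y : ℝ => y ^ 3 / 3 - h * y ^ 2 / 2)
          ((3 : ℕ) * x ^ 2 / 3 - h * ((2 : ℕ) * x ^ 1) / 2) x := h3.sub h2
      convert this using 1
      push_cast
      ring
    rw [intervalIntegral.integral_eq_sub_of_hasDerivAt hd
      (hcpoly.intervalIntegrable 0 h)]
    ring
  -- Step 3: integrate the ODE multiplied by y(y-h)
  have key3 : μ * (∫ y in (0:ℝ)..h, y * (y - h) * u'' y)
      + 𝒜 ^ 2 * μ ^ 2 * G * (∫ y in (0:ℝ)..h, y * (y - h) * (u' y) ^ 2)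
      = G * (-(h ^ 3) / 6) := by
    have : (∫ y in (0:ℝ)..h,
        (μ * (y * (y - h) * u'' y)
          + 𝒜 ^ 2 * μ ^ 2 * G * (y * (y - h) * (u' y) ^ 2)))
        = ∫ y in (0:ℝ)..h, G * (y * (y - h)) := by
      apply intervalIntegral.integral_congr
      intro y hy
      rw [Set.uIcc_of_le hle] at hy
      show μ * (y * (y - h) * u'' y)
          + 𝒜 ^ 2 * μ ^ 2 * G * (y * (y - h) * (u' y) ^ 2)
        = G * (y * (y - h))
      linear_combination (y * (y - h)) * hode y hy
    rw [intervalIntegral.integral_add (hiu''.const_mul μ)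
        (hiq.const_mul _),
      intervalIntegral.integral_const_mul, intervalIntegral.integral_const_mul,
      intervalIntegral.integral_const_mul, key2] at this
    linarith
  rw [key1'] at key3
  linarith
end

section
/- Let h, μ, p : ℝ → ℝ with h continuously differentiable and h(x) > 0 for all x, μ(x) > 0 for all x, p differentiable, let 𝒜, U⁰, Uʰ ∈ ℝ, and let u : ℝ × ℝ → ℝ be such that for each x the function y ↦ u(x,y) is twice continuously differentiable on [0,h(x)] and satisfies μ(x) ∂²u/∂y²(x,y) + 𝒜²μ(x)² p′(x) (∂u/∂y(x,y))² = p′(x) for all y ∈ [0,h(x)], with u(x,0) = U⁰ and u(x,h(x)) = Uʰ. If the flux x ↦ ∫₀^{h(x)} u(x,y) dy is constant in x, then the function x ↦ ( h(x)³/(12 μ(x)) − (𝒜² μ(x)/2) ∫₀^{h(x)} y (h(x) − y) (∂u/∂y(x,y))² dy ) · p′(x) is differentiable and its derivative equals (h′(x)/2)(U⁰ + Uʰ) for every x. -/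
set_option maxHeartbeats 1000000 in
/-- The modified (nonlinear) Reynolds equation for the piezoviscous regime
`α = O(ε)`: if for each `x` the profile `y ↦ u x y` solves
`μ x · u_yy + 𝒜² μ x ² p' x · (u_y)² = p' x` on `[0, h x]` with `u x 0 = U⁰`,
`u x (h x) = Uʰ`, and the flux `x ↦ ∫₀^{h x} u x y dy` is constant, then
`d/dx [ ( h³/(12μ) − (𝒜² μ / 2) ∫₀ʰ y (h − y) (u_y)² dy ) p' ]
  = (h'/2)(U⁰ + Uʰ)`. -/

theorem modified_reynolds_equation
    (h μ p : ℝ → ℝ) (hh : ContDiff ℝ 1 h) (hpos : ∀ x, 0 < h x)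
    (hμpos : ∀ x, 0 < μ x) (hp : Differentiable ℝ p)
    (𝒜 U0 Uh : ℝ) (u uy uyy : ℝ → ℝ → ℝ)
    (hu : ∀ x, ∀ y ∈ Set.Icc 0 (h x), HasDerivWithinAt (u x) (uy x y) (Set.Icc 0 (h x)) y)
    (huy : ∀ x, ∀ y ∈ Set.Icc 0 (h x), HasDerivWithinAt (uy x) (uyy x y) (Set.Icc 0 (h x)) y)
    (huyy : ∀ x, ContinuousOn (uyy x) (Set.Icc 0 (h x)))
    (hode : ∀ x, ∀ y ∈ Set.Icc 0 (h x),
      μ x * uyy x y + 𝒜 ^ 2 * μ x ^ 2 * deriv p x * (uy x y) ^ 2 = deriv p x)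
    (hbc0 : ∀ x, u x 0 = U0) (hbch : ∀ x, u x (h x) = Uh)
    (hflux : ∀ x₁ x₂, (∫ y in (0:ℝ)..h x₁, u x₁ y) = ∫ y in (0:ℝ)..h x₂, u x₂ y) :
    ∀ x, HasDerivAt
      (fun x => (h x ^ 3 / (12 * μ x)
          - 𝒜 ^ 2 * μ x / 2 * ∫ y in (0:ℝ)..h x, y * (h x - y) * (uy x y) ^ 2) * deriv p x)
      (deriv h x / 2 * (U0 + Uh)) x := by
  have key : ∀ x, (h x ^ 3 / (12 * μ x)
      - 𝒜 ^ 2 * μ x / 2 * ∫ y in (0:ℝ)..h x, y * (h x - y) * (uy x y) ^ 2) * deriv p x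
      = h x / 2 * (U0 + Uh) - ∫ y in (0:ℝ)..h x, u x y := by
    intro x
    set b := h x with hbdef
    have hb0 : (0:ℝ) < b := hpos x
    have hm : μ x ≠ 0 := (hμpos x).ne'
    set c := deriv p x with hcdef
    have hIcc : Set.uIcc (0:ℝ) b = Set.Icc 0 b := Set.uIcc_of_le hb0.le
    have hcv : ContinuousOn (u x) (Set.Icc 0 b) :=
      fun y hy => (hu x y hy).continuousWithinAt
    have hcvy : ContinuousOn (uy x) (Set.Icc 0 b) :=
      fun y hy => (huy x y hy).continuousWithinAt
    have hcvyy : ContinuousOn (uyy x) (Set.Icc 0 b) := huyy x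
    have hwcont : Continuous (fun y : ℝ => y * (b - y) / 2) := by continuity
    -- FTC for G y = (y(b-y)/2) * uy x y - (b/2 - y) * u x y
    set G : ℝ → ℝ := fun y => y * (b - y) / 2 * uy x y - (b / 2 - y) * u x y with hGdef
    have hGcont : ContinuousOn G (Set.Icc 0 b) := by
      apply ContinuousOn.sub
      · exact hwcont.continuousOn.mul hcvy
      · exact (Continuous.continuousOn (by continuity)).mul hcv
    have hGderiv : ∀ y ∈ Set.Ioo (0:ℝ) b,
        HasDerivAt G (y * (b - y) / 2 * uyy x y + u x y) y := by
      intro y hy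
      have hyI : y ∈ Set.Icc (0:ℝ) b := Set.mem_Icc_of_Ioo hy
      have hnb : Set.Icc (0:ℝ) b ∈ nhds y := Icc_mem_nhds hy.1 hy.2
      have hv : HasDerivAt (u x) (uy x y) y := (hu x y hyI).hasDerivAt hnb
      have hvy : HasDerivAt (uy x) (uyy x y) y := (huy x y hyI).hasDerivAt hnb
      have hw : HasDerivAt (fun y : ℝ => y * (b - y) / 2) ((b - 2 * y) / 2) y := by
        have := ((hasDerivAt_id y).mul ((hasDerivAt_const y b).sub (hasDerivAt_id y))).div_const 2
        exact this.congr_deriv (by simp only [Pi.sub_apply, id_eq]; ring)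
      have hw2 : HasDerivAt (fun y : ℝ => b / 2 - y) (-1) y := by
        exact ((hasDerivAt_const y (b / 2)).sub (hasDerivAt_id' y)).congr_deriv (by ring)
      have := (hw.mul hvy).sub (hw2.mul hv)
      exact this.congr_deriv (by ring)
    have hgint : IntervalIntegrable (fun y => y * (b - y) / 2 * uyy x y + u x y)
        MeasureTheory.volume 0 b := by
      apply ContinuousOn.intervalIntegrable
      rw [hIcc]
      exact (hwcont.continuousOn.mul hcvyy).add hcv
    have hFTC : (∫ y in (0:ℝ)..b, (y * (b - y) / 2 * uyy x y + u x y)) = G b - G 0 :=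
      intervalIntegral.integral_eq_sub_of_hasDeriv_right_of_le hb0.le hGcont
        (fun y hy => ((hGderiv y hy).hasDerivWithinAt)) hgint
    have hGb : G b = b / 2 * Uh := by
      simp only [hGdef, hbdef, hbch x]; ring
    have hG0 : G 0 = -(b / 2) * U0 := by
      simp only [hGdef, hbc0 x]; ring
    have hint1 : IntervalIntegrable (fun y => y * (b - y) / 2 * uyy x y)
        MeasureTheory.volume 0 b := by
      apply ContinuousOn.intervalIntegrable
      rw [hIcc]; exact hwcont.continuousOn.mul hcvyy
    have hint2 : IntervalIntegrable (u x) MeasureTheory.volume 0 b := by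
      apply ContinuousOn.intervalIntegrable; rw [hIcc]; exact hcv
    have hsplit : (∫ y in (0:ℝ)..b, y * (b - y) / 2 * uyy x y)
        = b / 2 * (U0 + Uh) - ∫ y in (0:ℝ)..b, u x y := by
      have := intervalIntegral.integral_add hint1 hint2
      rw [hFTC, hGb, hG0] at this
      linarith [this]
    -- rewrite the integrand using the ODE
    have hode' : ∀ y ∈ Set.Icc (0:ℝ) b, y * (b - y) / 2 * uyy x y
        = c / μ x * (y * (b - y) / 2) - 𝒜 ^ 2 * μ x * c / 2 * (y * (b - y) * (uy x y) ^ 2) := by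
      intro y hy
      have h1 := hode x y hy
      have h2 : uyy x y = (c - 𝒜 ^ 2 * μ x ^ 2 * c * (uy x y) ^ 2) / μ x := by
        field_simp
        linarith [h1]
      rw [h2]; field_simp
    have hcongr : (∫ y in (0:ℝ)..b, y * (b - y) / 2 * uyy x y)
        = ∫ y in (0:ℝ)..b, (c / μ x * (y * (b - y) / 2)
            - 𝒜 ^ 2 * μ x * c / 2 * (y * (b - y) * (uy x y) ^ 2)) := by
      apply intervalIntegral.integral_congr
      rw [hIcc]
      intro y hy
      exact hode' y hy
    have hintw : IntervalIntegrable (fun y : ℝ => c / μ x * (y * (b - y) / 2))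
        MeasureTheory.volume 0 b :=
      (continuous_const.mul ((continuous_id.mul (continuous_const.sub continuous_id)).div_const
        2)).intervalIntegrable _ _
    have hintf : IntervalIntegrable
        (fun y : ℝ => 𝒜 ^ 2 * μ x * c / 2 * (y * (b - y) * (uy x y) ^ 2))
        MeasureTheory.volume 0 b := by
      apply ContinuousOn.intervalIntegrable
      rw [hIcc]
      exact ContinuousOn.mul continuousOn_const
        (((continuous_id.mul (continuous_const.sub continuous_id)).continuousOn).mul
          (hcvy.pow 2))
    have hwval : (∫ y in (0:ℝ)..b, y * (b - y) / 2) = b ^ 3 / 12 := by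
      have : ∀ y : ℝ, y * (b - y) / 2 = b / 2 * y - 1 / 2 * y ^ 2 := fun y => by ring
      simp_rw [this]
      rw [intervalIntegral.integral_sub]
      · rw [intervalIntegral.integral_const_mul, intervalIntegral.integral_const_mul,
          integral_id, integral_pow]
        norm_num
        ring
      · exact (continuous_const.mul continuous_id).intervalIntegrable _ _
      · exact (continuous_const.mul (continuous_pow 2)).intervalIntegrable _ _
    have hsep : (∫ y in (0:ℝ)..b, (c / μ x * (y * (b - y) / 2)
          - 𝒜 ^ 2 * μ x * c / 2 * (y * (b - y) * (uy x y) ^ 2)))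
        = c / μ x * (b ^ 3 / 12)
          - 𝒜 ^ 2 * μ x * c / 2 * ∫ y in (0:ℝ)..b, y * (b - y) * (uy x y) ^ 2 := by
      rw [intervalIntegral.integral_sub hintw hintf,
        intervalIntegral.integral_const_mul, intervalIntegral.integral_const_mul, hwval]
    have hmain : c / μ x * (b ^ 3 / 12)
        - 𝒜 ^ 2 * μ x * c / 2 * (∫ y in (0:ℝ)..b, y * (b - y) * (uy x y) ^ 2)
        = b / 2 * (U0 + Uh) - ∫ y in (0:ℝ)..b, u x y := by
      rw [← hsep, ← hcongr, hsplit]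
    rw [← hmain]
    field_simp
  have hfun : (fun x => (h x ^ 3 / (12 * μ x)
      - 𝒜 ^ 2 * μ x / 2 * ∫ y in (0:ℝ)..h x, y * (h x - y) * (uy x y) ^ 2) * deriv p x)
      = fun x => h x / 2 * (U0 + Uh) - ∫ y in (0:ℝ)..h 0, u 0 y := by
    funext x
    rw [key x, hflux x 0]
  intro x
  rw [hfun]
  exact (((hh.differentiable one_ne_zero x).hasDerivAt.div_const 2).mul_const (U0 + Uh)).sub_const _
end

section
/- Let h > 0, μ > 0 and 𝒜 ∈ ℝ, and let u : [0,h] → ℝ be continuously differentiable with (𝒜 μ u′(y))² < 1 for all y ∈ [0,h]. Then h³/(12μ) − (𝒜² μ / 2) ∫₀ʰ y (h − y) (u′(y))² dy > 0. -/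
/-- Ellipticity of the modified Reynolds equation: if the shear stress is below
the reciprocal of the pressure–viscosity coefficient, i.e. `(𝒜 μ u')² < 1` on
`[0, h]`, then the diffusion coefficient
`h³/(12μ) − (𝒜² μ / 2) ∫₀ʰ y (h − y) (u')² dy` is positive. -/
theorem modified_reynolds_ellipticity
    (h μ 𝒜 : ℝ) (hh : 0 < h) (hμ : 0 < μ)
    (u u' : ℝ → ℝ)
    (hu : ∀ y ∈ Set.Icc 0 h, HasDerivWithinAt u (u' y) (Set.Icc 0 h) y)
    (hu' : ContinuousOn u' (Set.Icc 0 h))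
    (hbound : ∀ y ∈ Set.Icc 0 h, (𝒜 * μ * u' y) ^ 2 < 1) :
    0 < h ^ 3 / (12 * μ) - 𝒜 ^ 2 * μ / 2 * ∫ y in (0:ℝ)..h, y * (h - y) * (u' y) ^ 2 := by
  have hIcc : Set.uIcc (0:ℝ) h = Set.Icc 0 h := Set.uIcc_of_le hh.le
  -- continuity of (𝒜 μ u')² on [0,h]
  have hcont : ContinuousOn (fun y => (𝒜 * μ * u' y) ^ 2) (Set.Icc 0 h) := by
    exact ((continuousOn_const.mul hu').pow 2)
  -- attain the max
  obtain ⟨y0, hy0, hmax⟩ := isCompact_Icc.exists_isMaxOn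
    ⟨0, Set.left_mem_Icc.2 hh.le⟩ hcont
  set c : ℝ := (𝒜 * μ * u' y0) ^ 2 with hc
  have hc0 : 0 ≤ c := sq_nonneg _
  have hc1 : c < 1 := hbound y0 hy0
  -- integrability
  have hint1 : IntervalIntegrable (fun y => y * (h - y) * (𝒜 * μ * u' y) ^ 2)
      MeasureTheory.volume 0 h := by
    apply ContinuousOn.intervalIntegrable
    rw [hIcc]
    exact ((continuousOn_id.mul (continuousOn_const.sub continuousOn_id)).mul hcont)
  have hint2 : IntervalIntegrable (fun y => c * (y * (h - y)))
      MeasureTheory.volume 0 h := by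
    apply ContinuousOn.intervalIntegrable
    fun_prop
  -- pointwise bound
  have hmono : ∫ y in (0:ℝ)..h, y * (h - y) * (𝒜 * μ * u' y) ^ 2
      ≤ ∫ y in (0:ℝ)..h, c * (y * (h - y)) := by
    apply intervalIntegral.integral_mono_on hh.le hint1 hint2
    intro y hy
    have h1 : 0 ≤ y * (h - y) :=
      mul_nonneg hy.1 (sub_nonneg.2 hy.2)
    have h2 : (𝒜 * μ * u' y) ^ 2 ≤ c := hmax hy
    calc y * (h - y) * (𝒜 * μ * u' y) ^ 2 ≤ y * (h - y) * c := by
          exact mul_le_mul_of_nonneg_left h2 h1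
      _ = c * (y * (h - y)) := by ring
  -- compute ∫ y (h - y)
  have hval : ∫ y in (0:ℝ)..h, y * (h - y) = h ^ 3 / 6 := by
    have : ∀ y : ℝ, y * (h - y) = h * y - y ^ 2 := fun y => by ring
    simp_rw [this]
    rw [intervalIntegral.integral_sub (by apply ContinuousOn.intervalIntegrable; fun_prop)
      (by apply ContinuousOn.intervalIntegrable; fun_prop),
      intervalIntegral.integral_const_mul, integral_id, integral_pow]
    ring
  have hcval : ∫ y in (0:ℝ)..h, c * (y * (h - y)) = c * (h ^ 3 / 6) := by
    rw [intervalIntegral.integral_const_mul, hval]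
  -- rewrite goal
  have hrw : 𝒜 ^ 2 * μ / 2 * ∫ y in (0:ℝ)..h, y * (h - y) * (u' y) ^ 2
      = 1 / (2 * μ) * ∫ y in (0:ℝ)..h, y * (h - y) * (𝒜 * μ * u' y) ^ 2 := by
    rw [← intervalIntegral.integral_const_mul, ← intervalIntegral.integral_const_mul]
    apply intervalIntegral.integral_congr
    intro y _
    field_simp
  rw [hrw, sub_pos]
  have h2μ : 0 < 1 / (2 * μ) := by positivity
  calc 1 / (2 * μ) * ∫ y in (0:ℝ)..h, y * (h - y) * (𝒜 * μ * u' y) ^ 2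
      ≤ 1 / (2 * μ) * (c * (h ^ 3 / 6)) := by
        apply mul_le_mul_of_nonneg_left _ h2μ.le
        rw [← hcval]; exact hmono
    _ < 1 / (2 * μ) * (1 * (h ^ 3 / 6)) := by
        apply mul_lt_mul_of_pos_left _ h2μ
        have : 0 < h ^ 3 / 6 := by positivity
        exact mul_lt_mul_of_pos_right hc1 this
    _ = h ^ 3 / (12 * μ) := by field_simp; ring
end
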